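/- Let 0 ∈ A ⊂ ℤ^n with ⟨A⟩_ℤ = ℤ^n. Then E(A) is a finite union of sets of the form v + P(B ∪ {0}), where v ∈ C_A ∩ ℤ^n and B ⊆ A has at most n-1 elements which are linearly independent. Consequently #(E(A) ∩ N·H(A)) = O(N^{n-1}). -/

import Mathlib

open Pointwise

/-- Nonnegative integer combinations of the elements of a finite set of vectors. -/
def PV {n : ℕ} (A : Finset (Fin n → ℤ)) : Set (Fin n → ℤ) :=
  {x | ∃ c : (Fin n → ℤ) → ℕ, ∑ a ∈ A, (c a : ℤ) • a = x}

/-- Coordinatewise cast of an integer vector to a real vector. -/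
def castVec {n : ℕ} (v : Fin n → ℤ) : Fin n → ℝ := fun i => (v i : ℝ)

/-- The cone of nonnegative real combinations of a finite set of integer vectors. -/
def coneV {n : ℕ} (A : Finset (Fin n → ℤ)) : Set (Fin n → ℝ) :=
  {x | ∃ c : (Fin n → ℤ) → ℝ, (∀ a ∈ A, 0 ≤ c a) ∧ ∑ a ∈ A, c a • castVec a = x}

/-- The exceptional set: lattice points of the cone not representable. -/
def EV {n : ℕ} (A : Finset (Fin n → ℤ)) : Set (Fin n → ℤ) :=
  {x | castVec x ∈ coneV A ∧ x ∉ PV A}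

section Aux

variable {n : ℕ}

lemma castVec_add (x y : Fin n → ℤ) : castVec (x + y) = castVec x + castVec y := by
  funext j; simp [castVec]

lemma castVec_sum {α : Type*} (s : Finset α) (g : α → (Fin n → ℤ)) :
    castVec (∑ a ∈ s, g a) = ∑ a ∈ s, castVec (g a) := by
  funext j; simp [castVec, Finset.sum_apply]

lemma castVec_zsmul (m : ℤ) (x : Fin n → ℤ) : castVec (m • x) = (m : ℝ) • castVec x := by
  funext j; simp [castVec]

lemma zero_mem_PV (S : Finset (Fin n → ℤ)) : 0 ∈ PV S := ⟨fun _ => 0, by simp⟩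

lemma PV_add {S : Finset (Fin n → ℤ)} {x y : Fin n → ℤ}
    (hx : x ∈ PV S) (hy : y ∈ PV S) : x + y ∈ PV S := by
  obtain ⟨c, hc⟩ := hx; obtain ⟨d, hd⟩ := hy
  refine ⟨c + d, ?_⟩
  rw [← hc, ← hd, ← Finset.sum_add_distrib]
  refine Finset.sum_congr rfl fun a _ => ?_
  push_cast [Pi.add_apply]
  rw [add_smul]

lemma PV_nsmul {S : Finset (Fin n → ℤ)} (k : ℕ) {x : Fin n → ℤ}
    (hx : x ∈ PV S) : (k : ℤ) • x ∈ PV S := by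
  obtain ⟨c, hc⟩ := hx
  refine ⟨fun a => k * c a, ?_⟩
  rw [← hc, Finset.smul_sum]
  refine Finset.sum_congr rfl fun a _ => ?_
  push_cast
  rw [smul_smul]

lemma mem_PV_iff {S : Finset (Fin n → ℤ)} {x : Fin n → ℤ} :
    x ∈ PV S ↔ ∃ c : (Fin n → ℤ) → ℕ,
      (∀ a, a ∉ S → c a = 0) ∧ ∑ a ∈ S, (c a : ℤ) • a = x := by
  constructor
  · rintro ⟨c, hc⟩
    classical
    refine ⟨fun a => if a ∈ S then c a else 0, fun a ha => by simp [ha], ?_⟩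
    rw [← hc]
    exact Finset.sum_congr rfl fun a ha => by simp [ha]
  · rintro ⟨c, _, hc⟩
    exact ⟨c, hc⟩

lemma PV_mono {S S' : Finset (Fin n → ℤ)} (h : S ⊆ S') : PV S ⊆ PV S' := by
  intro x hx
  rw [mem_PV_iff] at hx ⊢
  obtain ⟨c, hsupp, hc⟩ := hx
  refine ⟨c, fun a ha => hsupp a fun h' => ha (h h'), ?_⟩
  rw [← Finset.sum_subset h fun a _ ha => by rw [hsupp a ha]; simp]
  exact hc

lemma PV_insert_zero (S : Finset (Fin n → ℤ)) : PV (insert 0 S) = PV S := by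
  classical
  by_cases h : (0 : Fin n → ℤ) ∈ S
  · rw [Finset.insert_eq_self.2 h]
  · ext x
    constructor
    · rintro ⟨c, hc⟩
      rw [Finset.sum_insert h] at hc
      exact ⟨c, by simpa using hc⟩
    · rintro ⟨c, hc⟩
      exact ⟨c, by rw [Finset.sum_insert h]; simpa using hc⟩

lemma sum_mem_coneV {A B : Finset (Fin n → ℤ)} (hBA : B ⊆ A) (c : (Fin n → ℤ) → ℝ)
    (h : ∀ b ∈ B, 0 ≤ c b) : ∑ b ∈ B, c b • castVec b ∈ coneV A := by
  classical
  refine ⟨fun a => if a ∈ B then c a else 0, fun a _ => ?_, ?_⟩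
  · dsimp only; split
    · exact h a ‹_›
    · exact le_refl 0
  · rw [← Finset.sum_subset hBA fun a _ ha => by simp [ha]]
    exact Finset.sum_congr rfl fun a ha => by simp [ha]

lemma coneV_add {A : Finset (Fin n → ℤ)} {x y : Fin n → ℝ}
    (hx : x ∈ coneV A) (hy : y ∈ coneV A) : x + y ∈ coneV A := by
  obtain ⟨c, hc0, hc⟩ := hx; obtain ⟨d, hd0, hd⟩ := hy
  refine ⟨c + d, fun a ha => add_nonneg (hc0 a ha) (hd0 a ha), ?_⟩
  rw [← hc, ← hd, ← Finset.sum_add_distrib]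
  exact Finset.sum_congr rfl fun a _ => by rw [Pi.add_apply, add_smul]

lemma castVec_mem_coneV_of_PV {A B : Finset (Fin n → ℤ)} (hBA : B ⊆ A) {x : Fin n → ℤ}
    (hx : x ∈ PV B) : castVec x ∈ coneV A := by
  obtain ⟨c, hc⟩ := hx
  have hcast : castVec x = ∑ b ∈ B, ((c b : ℤ) : ℝ) • castVec b := by
    rw [← hc, castVec_sum]
    exact Finset.sum_congr rfl fun b _ => castVec_zsmul _ _
  rw [hcast]
  exact sum_mem_coneV hBA _ fun b _ => by positivity


lemma cara_aux : ∀ (m : ℕ) (B : Finset (Fin n → ℤ)) (t : (Fin n → ℤ) → ℝ),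
    B.card ≤ m → (∀ b ∈ B, 0 ≤ t b) →
    ∃ B' : Finset (Fin n → ℤ), B' ⊆ B ∧
      LinearIndependent ℝ (fun b : ↥B' => castVec (b : Fin n → ℤ)) ∧
      ∃ t' : (Fin n → ℤ) → ℝ, (∀ b ∈ B', 0 ≤ t' b) ∧
        ∑ b ∈ B', t' b • castVec b = ∑ b ∈ B, t b • castVec b := by
  intro m
  induction m with
  | zero =>
    intro B t hcard _
    have hB : B = ∅ := Finset.card_eq_zero.1 (Nat.le_zero.1 hcard)
    subst hB
    exact ⟨∅, subset_rfl, linearIndependent_empty_type, t, by simp, rfl⟩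
  | succ m ih =>
    intro B t hcard ht
    by_cases hli : LinearIndependent ℝ (fun b : ↥B => castVec (b : Fin n → ℤ))
    · exact ⟨B, subset_rfl, hli, t, ht, rfl⟩
    · classical
      obtain ⟨g, hgsum, b₁, hb₁⟩ := Fintype.not_linearIndependent_iff.mp hli
      set gf : (Fin n → ℤ) → ℝ := fun a => if h : a ∈ B then g ⟨a, h⟩ else 0 with hgf
      have hgfsum : ∑ b ∈ B, gf b • castVec b = 0 := by
        rw [← Finset.sum_attach B (fun a => gf a • castVec a), ← hgsum]
        exact Finset.sum_congr rfl fun b _ => by simp [hgf, b.2]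
      have hgfex : ∃ b ∈ B, gf b ≠ 0 := ⟨b₁, b₁.2, by simp [hgf, b₁.2, hb₁]⟩
      -- choose a direction with a positive coefficient
      obtain ⟨d, hdsum, hdex⟩ :
          ∃ d : (Fin n → ℤ) → ℝ, ∑ b ∈ B, d b • castVec b = 0 ∧ ∃ b ∈ B, 0 < d b := by
        by_cases hpos : ∃ b ∈ B, 0 < gf b
        · exact ⟨gf, hgfsum, hpos⟩
        · push_neg at hpos
          obtain ⟨b₂, hb₂B, hb₂⟩ := hgfex
          refine ⟨fun a => -gf a, ?_, b₂, hb₂B, ?_⟩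
          · have heq : ∑ b ∈ B, (fun a => -gf a) b • castVec b
                = -∑ b ∈ B, gf b • castVec b := by
              rw [← Finset.sum_neg_distrib]
              exact Finset.sum_congr rfl fun a _ => by rw [neg_smul]
            rw [heq, hgfsum, neg_zero]
          · have h1 := hpos b₂ hb₂B
            have h2 : gf b₂ < 0 := lt_of_le_of_ne h1 hb₂
            simpa using neg_pos.mpr h2
      set s : Finset (Fin n → ℤ) := B.filter (fun b => 0 < d b) with hs
      have hsne : s.Nonempty := by
        obtain ⟨b, hbB, hbd⟩ := hdex
        exact ⟨b, Finset.mem_filter.2 ⟨hbB, hbd⟩⟩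
      obtain ⟨b₀, hb₀s, hb₀min⟩ := Finset.exists_min_image s (fun b => t b / d b) hsne
      have hb₀B : b₀ ∈ B := (Finset.mem_filter.1 hb₀s).1
      have hb₀d : 0 < d b₀ := (Finset.mem_filter.1 hb₀s).2
      set t0 : ℝ := t b₀ / d b₀ with ht0def
      have ht0 : 0 ≤ t0 := div_nonneg (ht b₀ hb₀B) (le_of_lt hb₀d)
      set t' : (Fin n → ℤ) → ℝ := fun b => t b - t0 * d b with ht'
      have ht'nonneg : ∀ b ∈ B, 0 ≤ t' b := by
        intro b hb
        by_cases hdb : 0 < d b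
        · have hmin := hb₀min b (Finset.mem_filter.2 ⟨hb, hdb⟩)
          have : t0 * d b ≤ t b := by
            rw [← le_div_iff₀ hdb]; exact hmin
          simp [ht', sub_nonneg, this]
        · push_neg at hdb
          have h1 : t0 * d b ≤ 0 := mul_nonpos_of_nonneg_of_nonpos ht0 hdb
          have h2 : 0 ≤ t b := ht b hb
          simp only [ht', sub_nonneg]
          linarith
      have ht'b₀ : t' b₀ = 0 := by
        simp only [ht', ht0def]
        rw [div_mul_cancel₀ _ (ne_of_gt hb₀d)]
        ring
      have hsum' : ∑ b ∈ B.erase b₀, t' b • castVec b = ∑ b ∈ B, t b • castVec b := by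
        rw [Finset.sum_erase _ (by rw [ht'b₀, zero_smul])]
        have : ∀ b ∈ B, t' b • castVec b = t b • castVec b - t0 • (d b • castVec b) := by
          intro b _
          rw [ht']; rw [sub_smul, smul_smul]
        rw [Finset.sum_congr rfl this, Finset.sum_sub_distrib, ← Finset.smul_sum, hdsum,
          smul_zero, sub_zero]
      have hcard' : (B.erase b₀).card ≤ m := by
        have h1 := Finset.card_erase_of_mem hb₀B
        have h2 : 1 ≤ B.card := Finset.card_pos.2 ⟨b₀, hb₀B⟩
        omega
      obtain ⟨B', hB'sub, hB'li, t'', ht''0, ht''sum⟩ :=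
        ih (B.erase b₀) t' hcard' (fun b hb => ht'nonneg b (Finset.mem_of_mem_erase hb))
      exact ⟨B', hB'sub.trans (Finset.erase_subset _ _), hB'li, t'',
        ht''0, by rw [ht''sum, hsum']⟩

/-- Conic Carathéodory: every element of the cone is a nonnegative combination of a
linearly independent subset. -/
lemma cara {A : Finset (Fin n → ℤ)} {x : Fin n → ℝ} (hx : x ∈ coneV A) :
    ∃ B : Finset (Fin n → ℤ), B ⊆ A ∧
      LinearIndependent ℝ (fun b : ↥B => castVec (b : Fin n → ℤ)) ∧
      ∃ t : (Fin n → ℤ) → ℝ, (∀ b ∈ B, 0 ≤ t b) ∧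
        ∑ b ∈ B, t b • castVec b = x := by
  obtain ⟨c, hc0, hc⟩ := hx
  obtain ⟨B, hBA, hli, t, ht0, htsum⟩ := cara_aux A.card A c le_rfl hc0
  exact ⟨B, hBA, hli, t, ht0, by rw [htsum, hc]⟩


lemma floor_decomp {B : Finset (Fin n → ℤ)} {x : Fin n → ℤ} {t : (Fin n → ℤ) → ℝ}
    (ht0 : ∀ b ∈ B, 0 ≤ t b)
    (hsum : ∑ b ∈ B, t b • castVec b = castVec x) :
    ∃ f p : Fin n → ℤ, p ∈ PV B ∧ x = f + p ∧ castVec f ∈ coneV B ∧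
      ∀ j, |f j| ≤ ∑ b ∈ B, |b j| := by
  classical
  set p : Fin n → ℤ := ∑ b ∈ B, ((⌊t b⌋₊ : ℤ)) • b with hp
  have hpPV : p ∈ PV B := ⟨fun b => ⌊t b⌋₊, rfl⟩
  set f : Fin n → ℤ := x - p with hf
  have hfx : x = f + p := by rw [hf]; ring
  have hcastf : castVec f = ∑ b ∈ B, (t b - (⌊t b⌋₊ : ℝ)) • castVec b := by
    have h0 : castVec f = castVec x - castVec p := by
      funext j; simp [castVec, hf]
    rw [h0, ← hsum, hp, castVec_sum, ← Finset.sum_sub_distrib]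
    refine Finset.sum_congr rfl fun b _ => ?_
    rw [castVec_zsmul, sub_smul]
    norm_num
  have hfrac0 : ∀ b ∈ B, 0 ≤ t b - (⌊t b⌋₊ : ℝ) := fun b hb =>
    sub_nonneg.2 (Nat.floor_le (ht0 b hb))
  have hfrac1 : ∀ b ∈ B, t b - (⌊t b⌋₊ : ℝ) ≤ 1 := fun b hb => by
    have := Nat.lt_floor_add_one (t b); linarith
  refine ⟨f, p, hpPV, hfx, by rw [hcastf]; exact sum_mem_coneV subset_rfl _ hfrac0, ?_⟩
  intro j
  have h1 : (castVec f) j = ∑ b ∈ B, (t b - (⌊t b⌋₊ : ℝ)) * (b j : ℝ) := by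
    rw [hcastf]; simp [castVec, Finset.sum_apply]
  have h2 : |(castVec f) j| ≤ ∑ b ∈ B, ((|b j| : ℤ) : ℝ) := by
    rw [h1]
    refine (Finset.abs_sum_le_sum_abs _ _).trans ?_
    refine Finset.sum_le_sum fun b hb => ?_
    rw [abs_mul]
    have hb1 : |t b - (⌊t b⌋₊ : ℝ)| ≤ 1 := by
      rw [abs_of_nonneg (hfrac0 b hb)]; exact hfrac1 b hb
    calc |t b - (⌊t b⌋₊ : ℝ)| * |(b j : ℝ)| ≤ 1 * |(b j : ℝ)| :=
          mul_le_mul_of_nonneg_right hb1 (abs_nonneg _)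
      _ = ((|b j| : ℤ) : ℝ) := by rw [one_mul]; push_cast; rfl
  have h3 : |(castVec f) j| = ((|f j| : ℤ) : ℝ) := by
    rw [Int.cast_abs]; rfl
  rw [h3] at h2
  exact_mod_cast h2

lemma list_choice {α β : Type*} (l : List α) (Q : α → List β → Prop)
    (h : ∀ x ∈ l, ∃ L, Q x L) : ∃ F : α → List β, ∀ x ∈ l, Q x (F x) := by
  classical
  refine ⟨fun x => if h' : ∃ L, Q x L then h'.choose else [], fun x hx => ?_⟩
  have h' := h x hx
  simp only [dif_pos h']
  exact h'.choose_spec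

lemma downset : ∀ (M : ℕ) (B : Finset (Fin n → ℤ)) (D : Set ((Fin n → ℤ) → ℕ)),
    B.card ≤ M →
    (∀ c ∈ D, ∀ a, a ∉ B → c a = 0) →
    (∀ c ∈ D, ∀ c' : (Fin n → ℤ) → ℕ, (∀ a, c' a ≤ c a) → c' ∈ D) →
    ∃ L : List (((Fin n → ℤ) → ℕ) × Finset (Fin n → ℤ)),
      (∀ p ∈ L, p.2 ⊆ B ∧
        (∀ c' : (Fin n → ℤ) → ℕ, (∀ a, a ∉ p.2 → c' a = 0) → p.1 + c' ∈ D)) ∧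
      (∀ c ∈ D, ∃ p ∈ L, ∃ c' : (Fin n → ℤ) → ℕ,
        (∀ a, a ∉ p.2 → c' a = 0) ∧ c = p.1 + c') ∧
      ((∃ c : (Fin n → ℤ) → ℕ, (∀ a, a ∉ B → c a = 0) ∧ c ∉ D) →
        ∀ p ∈ L, p.2 ≠ B) := by
  intro M
  induction M with
  | zero =>
    intro B D hcard hsupp hdown
    have hB : B = ∅ := Finset.card_eq_zero.1 (Nat.le_zero.1 hcard)
    subst hB
    by_cases hfull : ∀ c : (Fin n → ℤ) → ℕ, (∀ a, a ∉ (∅ : Finset (Fin n → ℤ)) → c a = 0) → c ∈ D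
    · refine ⟨[(fun _ => 0, ∅)], ?_, ?_, ?_⟩
      · intro p hp
        rw [List.mem_singleton] at hp
        subst hp
        refine ⟨subset_rfl, fun c' hc' => ?_⟩
        have : (fun _ => (0:ℕ)) + c' = c' := by funext a; simp
        rw [this]
        exact hfull c' hc'
      · intro c hc
        refine ⟨(fun _ => 0, ∅), List.mem_singleton_self _, c,
          fun a ha => hsupp c hc a ha, by funext a; simp⟩
      · rintro ⟨u, hus, huD⟩ p hp
        exact absurd (hfull u hus) huD
    · push_neg at hfull
      obtain ⟨u, husupp, huD⟩ := hfull
      refine ⟨[], by simp, ?_, by simp⟩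
      intro c hc
      exfalso
      have hc0 : c = u := by
        funext a
        rw [hsupp c hc a (Finset.notMem_empty a), husupp a (Finset.notMem_empty a)]
      exact huD (hc0 ▸ hc)
  | succ M ih =>
    intro B D hcard hsupp hdown
    classical
    by_cases hfull : ∀ c : (Fin n → ℤ) → ℕ, (∀ a, a ∉ B → c a = 0) → c ∈ D
    · refine ⟨[(fun _ => 0, B)], ?_, ?_, ?_⟩
      · intro p hp
        rw [List.mem_singleton] at hp
        subst hp
        refine ⟨subset_rfl, fun c' hc' => ?_⟩
        have : (fun _ => (0:ℕ)) + c' = c' := by funext a; simp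
        rw [this]
        exact hfull c' hc'
      · intro c hc
        refine ⟨(fun _ => 0, B), List.mem_singleton_self _, c,
          fun a ha => hsupp c hc a ha, by funext a; simp⟩
      · rintro ⟨u, hus, huD⟩ p hp
        exact absurd (hfull u hus) huD
    · push_neg at hfull
      obtain ⟨u, husupp, huD⟩ := hfull
      have hkey : ∀ c ∈ D, ∃ b ∈ B, c b < u b := by
        intro c hc
        by_contra h
        push_neg at h
        have hle : ∀ a, u a ≤ c a := by
          intro a
          by_cases haB : a ∈ B
          · exact h a haB
          · rw [husupp a haB]; exact Nat.zero_le _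
        exact huD (hdown c hc u hle)
      set shift : (Fin n → ℤ) → ℕ → ((Fin n → ℤ) → ℕ) :=
        fun b r => (fun a => if a = b then r else 0) with hshift
      set P : List ((Fin n → ℤ) × ℕ) :=
        B.toList.flatMap (fun b => (List.range (u b)).map (fun r => (b, r))) with hP
      have hPmem : ∀ bm ∈ P, bm.1 ∈ B := by
        intro bm hbm
        rw [hP, List.mem_flatMap] at hbm
        obtain ⟨b, hb, hbm2⟩ := hbm
        obtain ⟨r, _, hr2⟩ := List.mem_map.1 hbm2
        rw [← hr2]
        exact Finset.mem_toList.1 hb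
      have hex : ∀ bm ∈ P, ∃ L' : List (((Fin n → ℤ) → ℕ) × Finset (Fin n → ℤ)),
          (∀ p ∈ L', p.2 ⊆ B.erase bm.1 ∧
            (∀ c' : (Fin n → ℤ) → ℕ, (∀ a, a ∉ p.2 → c' a = 0) → p.1 + c' ∈ D)) ∧
          (∀ c : (Fin n → ℤ) → ℕ, c bm.1 = 0 → c + shift bm.1 bm.2 ∈ D →
            ∃ p ∈ L', ∃ c' : (Fin n → ℤ) → ℕ,
              (∀ a, a ∉ p.2 → c' a = 0) ∧ c + shift bm.1 bm.2 = p.1 + c') := by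
        intro bm hbm
        have hbB : bm.1 ∈ B := hPmem bm hbm
        set E : Set ((Fin n → ℤ) → ℕ) := {c | c bm.1 = 0 ∧ c + shift bm.1 bm.2 ∈ D} with hE
        have hcard' : (B.erase bm.1).card ≤ M := by
          have h1 := Finset.card_erase_of_mem hbB
          have h2 := Finset.card_pos.2 ⟨bm.1, hbB⟩
          omega
        have hsupp' : ∀ c ∈ E, ∀ a, a ∉ B.erase bm.1 → c a = 0 := by
          intro c hc a ha
          by_cases hab : a = bm.1
          · rw [hab]; exact hc.1
          · have haB : a ∉ B := fun h' => ha (Finset.mem_erase.2 ⟨hab, h'⟩)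
            have h0 := hsupp _ hc.2 a haB
            simpa [hshift, hab] using h0
        have hdown' : ∀ c ∈ E, ∀ c' : (Fin n → ℤ) → ℕ, (∀ a, c' a ≤ c a) → c' ∈ E := by
          intro c hc c' hle
          refine ⟨Nat.le_zero.1 ((hle bm.1).trans_eq hc.1), ?_⟩
          refine hdown _ hc.2 _ fun a => ?_
          simp only [Pi.add_apply]
          exact Nat.add_le_add_right (hle a) _
        obtain ⟨L0, hL0a, hL0b, _⟩ := ih (B.erase bm.1) E hcard' hsupp' hdown'
        refine ⟨L0.map (fun p => (p.1 + shift bm.1 bm.2, p.2)), ?_, ?_⟩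
        · intro p hp
          obtain ⟨q, hqL, hq⟩ := List.mem_map.1 hp
          obtain ⟨hq2, hqD⟩ := hL0a q hqL
          subst hq
          refine ⟨hq2, fun c' hc' => ?_⟩
          have hmem := (hqD c' hc').2
          have heq : q.1 + shift bm.1 bm.2 + c' = q.1 + c' + shift bm.1 bm.2 := by
            funext a; simp only [Pi.add_apply]; ring
          rw [heq]
          exact hmem
        · intro c hcb hcD
          have hcE : c ∈ E := ⟨hcb, hcD⟩
          obtain ⟨p, hpL, c', hc's, hc'e⟩ := hL0b c hcE
          refine ⟨(p.1 + shift bm.1 bm.2, p.2), List.mem_map_of_mem hpL, c', hc's, ?_⟩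
          rw [hc'e]
          funext a; simp only [Pi.add_apply]; ring
      obtain ⟨F, hF⟩ := list_choice P _ hex
      refine ⟨P.flatMap F, ?_, ?_, ?_⟩
      · intro p hp
        obtain ⟨bm, hbm, hpF⟩ := List.mem_flatMap.1 hp
        obtain ⟨hsub, hmem⟩ := (hF bm hbm).1 p hpF
        exact ⟨hsub.trans (Finset.erase_subset _ _), hmem⟩
      · intro c hc
        obtain ⟨b, hbB, hbu⟩ := hkey c hc
        set bm : (Fin n → ℤ) × ℕ := (b, c b) with hbm
        have hbmP : bm ∈ P := by
          rw [hP, List.mem_flatMap]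
          exact ⟨b, Finset.mem_toList.2 hbB,
            List.mem_map.2 ⟨c b, List.mem_range.2 hbu, rfl⟩⟩
        set c₀ : (Fin n → ℤ) → ℕ := fun a => if a = b then 0 else c a with hc₀
        have hc₀b : c₀ bm.1 = 0 := by simp [hc₀, hbm]
        have hc₀shift : c₀ + shift bm.1 bm.2 = c := by
          funext a
          by_cases hab : a = b
          · subst hab; simp [hc₀, hshift, hbm]
          · simp [hc₀, hshift, hbm, hab]
        have hc₀D : c₀ + shift bm.1 bm.2 ∈ D := by rw [hc₀shift]; exact hc
        obtain ⟨p, hpF, c', hc's, hc'e⟩ := (hF bm hbmP).2 c₀ hc₀b hc₀D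
        refine ⟨p, List.mem_flatMap.2 ⟨bm, hbmP, hpF⟩, c', hc's, ?_⟩
        rw [← hc₀shift, hc'e]
      · intro _ p hp
        obtain ⟨bm, hbm, hpF⟩ := List.mem_flatMap.1 hp
        have hsub := ((hF bm hbm).1 p hpF).1
        intro hcon
        have hbB : bm.1 ∈ B := hPmem bm hbm
        have : bm.1 ∈ B.erase bm.1 := hsub (hcon ▸ hbB)
        exact (Finset.notMem_erase _ _) this


lemma full_rank_mult {B : Finset (Fin n → ℤ)} (hBcard : B.card = n)
    (hind : ∀ c : (Fin n → ℤ) → ℤ, ∑ w ∈ B, c w • w = 0 → ∀ w ∈ B, c w = 0) :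
    ∃ m : ℤ, 0 < m ∧ ∀ a : Fin n → ℤ, ∃ z : (Fin n → ℤ) → ℤ,
      m • a = ∑ w ∈ B, z w • w := by
  classical
  have hcard' : Fintype.card ↥B = n := by rw [Fintype.card_coe]; exact hBcard
  set e : ↥B ≃ Fin n := Fintype.equivFinOfCardEq hcard' with he
  set Mx : Matrix (Fin n) (Fin n) ℤ := fun i j => (e.symm j : Fin n → ℤ) i with hMx
  have key : ∀ v : Fin n → ℤ,
      ∑ w ∈ B, (fun a => if h : a ∈ B then v (e ⟨a, h⟩) else 0) w • w = Mx.mulVec v := by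
    intro v
    rw [← Finset.sum_attach B (fun w => (fun a => if h : a ∈ B then v (e ⟨a, h⟩) else 0) w • w)]
    have h1 : ∀ w : ↥B, (fun a => if h : a ∈ B then v (e ⟨a, h⟩) else 0) (w : Fin n → ℤ) • (w : Fin n → ℤ)
        = v (e w) • (w : Fin n → ℤ) := by
      intro w
      have hw := w.2
      simp only [dif_pos hw, Subtype.coe_eta]
    rw [Finset.sum_congr rfl (fun w _ => h1 w)]
    have h2 : ∑ w ∈ B.attach, v (e w) • (w : Fin n → ℤ)
        = ∑ j : Fin n, v j • (e.symm j : Fin n → ℤ) := by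
      rw [← Finset.univ_eq_attach]
      exact Fintype.sum_equiv e _ _ (fun w => by simp)
    rw [h2]
    funext i
    rw [Finset.sum_apply]
    simp only [Matrix.mulVec, dotProduct, hMx]
    exact Finset.sum_congr rfl fun j _ => by simp [mul_comm]
  have hdet : Mx.det ≠ 0 := by
    intro h
    obtain ⟨v, hv0, hv⟩ := Matrix.exists_mulVec_eq_zero_iff.2 h
    have hsum : ∑ w ∈ B, (fun a => if h : a ∈ B then v (e ⟨a, h⟩) else 0) w • w = 0 := by
      rw [key, hv]
    have hzero := hind _ hsum
    apply hv0
    funext j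
    have hj := hzero (e.symm j : Fin n → ℤ) (e.symm j).2
    rw [dif_pos (e.symm j).2] at hj
    simpa using hj
  have hmain : ∀ a : Fin n → ℤ, ∃ z : (Fin n → ℤ) → ℤ,
      Mx.det • a = ∑ w ∈ B, z w • w := by
    intro a
    refine ⟨fun w => if h : w ∈ B then Mx.adjugate.mulVec a (e ⟨w, h⟩) else 0, ?_⟩
    rw [key]
    rw [Matrix.mulVec_mulVec, Matrix.mul_adjugate, Matrix.smul_mulVec, Matrix.one_mulVec]
  rcases lt_trichotomy Mx.det 0 with hlt | heq | hgt
  · refine ⟨-Mx.det, by omega, fun a => ?_⟩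
    obtain ⟨z, hz⟩ := hmain a
    refine ⟨-z, ?_⟩
    rw [neg_smul, hz, ← Finset.sum_neg_distrib]
    exact Finset.sum_congr rfl fun w _ => by simp [Pi.neg_apply, neg_smul]
  · exact absurd heq hdet
  · exact ⟨Mx.det, hgt, hmain⟩

lemma absorb {A B : Finset (Fin n → ℤ)} (hBA : B ⊆ A)
    (hspan : Submodule.span ℤ (A : Set (Fin n → ℤ)) = ⊤) (hBcard : B.card = n)
    (hind : ∀ c : (Fin n → ℤ) → ℤ, ∑ w ∈ B, c w • w = 0 → ∀ w ∈ B, c w = 0)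
    (f : Fin n → ℤ) : ∃ p ∈ PV B, f + p ∈ PV A := by
  classical
  obtain ⟨m, hm, hz⟩ := full_rank_mult hBcard hind
  have habs : ∀ a : Fin n → ℤ, ∃ u v : Fin n → ℤ,
      u ∈ PV B ∧ v ∈ PV B ∧ m • a + v = u := by
    intro a
    obtain ⟨z, hzeq⟩ := hz a
    refine ⟨∑ w ∈ B, (((z w).toNat : ℤ)) • w, ∑ w ∈ B, ((((-z w).toNat : ℤ))) • w,
      ⟨fun w => (z w).toNat, rfl⟩, ⟨fun w => (-z w).toNat, rfl⟩, ?_⟩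
    rw [hzeq, ← Finset.sum_add_distrib]
    refine Finset.sum_congr rfl fun w _ => ?_
    rw [← add_smul]
    congr 1
    omega
  choose uf vf huPV hvPV huv using habs
  have hfA : f ∈ Submodule.span ℤ (A : Set (Fin n → ℤ)) := hspan ▸ Submodule.mem_top
  obtain ⟨zf, -, hzf⟩ := Submodule.mem_span_finset.1 hfA
  set k : (Fin n → ℤ) → ℕ := fun a => (-(zf a)).toNat with hk
  have hknn : ∀ a, 0 ≤ zf a + (k a : ℤ) * m := by
    intro a
    have h1 : -(zf a) ≤ ((k a : ℤ)) := Int.self_le_toNat _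
    have h2 : (0:ℤ) ≤ (k a : ℤ) := Int.ofNat_nonneg _
    nlinarith
  set p : Fin n → ℤ := ∑ a ∈ A, ((k a : ℤ)) • uf a with hp
  have hpPV : p ∈ PV B := by
    rw [hp]
    refine Finset.sum_induction _ (· ∈ PV B) (fun x y hx hy => PV_add hx hy)
      (zero_mem_PV B) (fun a _ => PV_nsmul (k a) (huPV a))
  have hfp : f + p = (∑ a ∈ A, (zf a + (k a : ℤ) * m) • a)
      + ∑ a ∈ A, ((k a : ℤ)) • vf a := by
    rw [← hzf, hp, ← Finset.sum_add_distrib, ← Finset.sum_add_distrib]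
    refine Finset.sum_congr rfl fun a _ => ?_
    have h1 : uf a = m • a + vf a := (huv a).symm
    rw [h1, smul_add, smul_smul, add_smul, mul_comm]
    abel
  have h1mem : (∑ a ∈ A, (zf a + (k a : ℤ) * m) • a) ∈ PV A := by
    refine ⟨fun a => (zf a + (k a : ℤ) * m).toNat, ?_⟩
    exact Finset.sum_congr rfl fun a _ => by rw [Int.toNat_of_nonneg (hknn a)]
  have h2mem : (∑ a ∈ A, ((k a : ℤ)) • vf a) ∈ PV A := by
    refine Finset.sum_induction _ (· ∈ PV A) (fun x y hx hy => PV_add hx hy)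
      (zero_mem_PV A) (fun a _ => PV_nsmul (k a) (PV_mono hBA (hvPV a)))
  exact ⟨p, hpPV, by rw [hfp]; exact PV_add h1mem h2mem⟩


lemma gram_bound {T : Finset (Fin n → ℤ)}
    (hind : ∀ c : (Fin n → ℤ) → ℤ, ∑ w ∈ T, c w • w = 0 → ∀ w ∈ T, c w = 0) :
    ∃ K : ℕ, ∀ (c : (Fin n → ℤ) → ℕ) (M : ℕ),
      (∀ j, |(∑ w ∈ T, ((c w : ℤ)) • w) j| ≤ (M : ℤ)) →
      ∀ w ∈ T, c w ≤ K * M := by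
  classical
  set G : Matrix ↥T ↥T ℤ :=
    fun w w' => ∑ j, (w : Fin n → ℤ) j * (w' : Fin n → ℤ) j with hG
  have hGd : ∀ (d : ↥T → ℤ) (w : ↥T), G.mulVec d w
      = ∑ j, (w : Fin n → ℤ) j * ((∑ w' ∈ T.attach, d w' • (w' : Fin n → ℤ)) j) := by
    intro d w
    simp only [Matrix.mulVec, dotProduct, hG]
    rw [← Finset.univ_eq_attach]
    have h1 : ∀ j, (∑ w' : ↥T, d w' • (w' : Fin n → ℤ)) j
        = ∑ w' : ↥T, d w' * (w' : Fin n → ℤ) j := by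
      intro j; rw [Finset.sum_apply]; rfl
    calc ∑ w' : ↥T, (∑ j, (w : Fin n → ℤ) j * (w' : Fin n → ℤ) j) * d w'
        = ∑ w' : ↥T, ∑ j, ((w : Fin n → ℤ) j * (w' : Fin n → ℤ) j) * d w' :=
          Finset.sum_congr rfl fun w' _ => Finset.sum_mul _ _ _
      _ = ∑ j, ∑ w' : ↥T, ((w : Fin n → ℤ) j * (w' : Fin n → ℤ) j) * d w' :=
          Finset.sum_comm
      _ = ∑ j, (w : Fin n → ℤ) j * ((∑ w' : ↥T, d w' • (w' : Fin n → ℤ)) j) := by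
          refine Finset.sum_congr rfl fun j _ => ?_
          rw [h1 j, Finset.mul_sum]
          exact Finset.sum_congr rfl fun w' _ => by ring
  have hxd : ∀ d : ↥T → ℤ, ∑ w' ∈ T.attach, d w' • (w' : Fin n → ℤ)
      = ∑ w ∈ T, (fun a => if h : a ∈ T then d ⟨a, h⟩ else 0) w • w := by
    intro d
    rw [← Finset.sum_attach T (fun w => (fun a => if h : a ∈ T then d ⟨a, h⟩ else 0) w • w)]
    refine Finset.sum_congr rfl fun w _ => ?_
    have hw := w.2
    simp only [dif_pos hw, Subtype.coe_eta]
  have hdet : G.det ≠ 0 := by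
    intro h
    obtain ⟨v, hv0, hv⟩ := Matrix.exists_mulVec_eq_zero_iff.2 h
    set xv := ∑ w' ∈ T.attach, v w' • (w' : Fin n → ℤ) with hxv
    have h1 : ∀ w : ↥T, ∑ j, (w : Fin n → ℤ) j * xv j = 0 := by
      intro w
      rw [← hGd v w, hv]
      rfl
    have h2 : ∑ j, xv j * xv j = 0 := by
      have hexp : ∑ j, xv j * xv j
          = ∑ w' ∈ T.attach, v w' * ∑ j, (w' : Fin n → ℤ) j * xv j := by
        calc ∑ j, xv j * xv j
            = ∑ j, (∑ w' ∈ T.attach, v w' * (w' : Fin n → ℤ) j) * xv j := by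
              refine Finset.sum_congr rfl fun j _ => ?_
              congr 1
              rw [hxv, Finset.sum_apply]
              rfl
          _ = ∑ j, ∑ w' ∈ T.attach, (v w' * (w' : Fin n → ℤ) j) * xv j :=
              Finset.sum_congr rfl fun j _ => Finset.sum_mul _ _ _
          _ = ∑ w' ∈ T.attach, ∑ j, (v w' * (w' : Fin n → ℤ) j) * xv j :=
              Finset.sum_comm
          _ = ∑ w' ∈ T.attach, v w' * ∑ j, (w' : Fin n → ℤ) j * xv j := by
              refine Finset.sum_congr rfl fun w' _ => ?_
              rw [Finset.mul_sum]
              exact Finset.sum_congr rfl fun j _ => by ring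
      rw [hexp]
      exact Finset.sum_eq_zero fun w' _ => by rw [h1 w', mul_zero]
    have h3 : xv = 0 := by
      funext j
      have h4 := (Finset.sum_eq_zero_iff_of_nonneg
        (fun j _ => mul_self_nonneg (xv j))).1 h2 j (Finset.mem_univ j)
      exact mul_self_eq_zero.1 h4
    have h4 := hind _ (by rw [← hxd v, ← hxv]; exact h3)
    apply hv0
    funext w
    have h5 := h4 (w : Fin n → ℤ) w.2
    rw [dif_pos w.2] at h5
    simpa [Subtype.coe_eta] using h5
  set S : ℤ := ∑ w ∈ T, ∑ j, |(w j)| with hS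
  have hS0 : 0 ≤ S := Finset.sum_nonneg fun w _ =>
    Finset.sum_nonneg fun j _ => abs_nonneg _
  set adjsum : ℤ := ∑ w : ↥T, ∑ w' : ↥T, |G.adjugate w w'| with hadjsum
  have hadjsum0 : 0 ≤ adjsum := Finset.sum_nonneg fun w _ =>
    Finset.sum_nonneg fun w' _ => abs_nonneg _
  refine ⟨(adjsum * S).toNat, ?_⟩
  intro c M hM w hw
  set d : ↥T → ℤ := fun w' => (c (w' : Fin n → ℤ) : ℤ) with hd
  set x : Fin n → ℤ := ∑ w ∈ T, ((c w : ℤ)) • w with hx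
  have hx_attach : ∑ w' ∈ T.attach, d w' • ((w' : Fin n → ℤ)) = x := by
    rw [hxd d, hx]
    refine Finset.sum_congr rfl fun w hwT => ?_
    simp only [dif_pos hwT, hd]
  have hyb : ∀ w' : ↥T, |G.mulVec d w'| ≤ S * M := by
    intro w'
    rw [hGd d w', hx_attach]
    calc |∑ j, (w' : Fin n → ℤ) j * x j| ≤ ∑ j, |(w' : Fin n → ℤ) j * x j| :=
          Finset.abs_sum_le_sum_abs _ _
      _ ≤ ∑ j, |(w' : Fin n → ℤ) j| * (M : ℤ) := by
          refine Finset.sum_le_sum fun j _ => ?_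
          rw [abs_mul]
          exact mul_le_mul_of_nonneg_left (hM j) (abs_nonneg _)
      _ = (∑ j, |(w' : Fin n → ℤ) j|) * (M : ℤ) := (Finset.sum_mul _ _ _).symm
      _ ≤ S * M := by
          refine mul_le_mul_of_nonneg_right ?_ (Int.ofNat_nonneg M)
          rw [hS]
          exact Finset.single_le_sum
            (f := fun w : Fin n → ℤ => ∑ j, |(w j)|)
            (fun w _ => Finset.sum_nonneg fun j _ => abs_nonneg _) w'.2
  have hadj : G.det • d = G.adjugate.mulVec (G.mulVec d) := by
    rw [Matrix.mulVec_mulVec, Matrix.adjugate_mul, Matrix.smul_mulVec,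
      Matrix.one_mulVec]
  have h7 : G.det * d ⟨w, hw⟩ = ∑ w', G.adjugate ⟨w, hw⟩ w' * G.mulVec d w' := by
    have h8 := congrFun hadj ⟨w, hw⟩
    simpa [Matrix.mulVec, dotProduct] using h8
  have h9 : |G.det * d ⟨w, hw⟩| ≤ adjsum * S * M := by
    rw [h7]
    calc |∑ w', G.adjugate ⟨w, hw⟩ w' * G.mulVec d w'|
        ≤ ∑ w', |G.adjugate ⟨w, hw⟩ w' * G.mulVec d w'| := Finset.abs_sum_le_sum_abs _ _
      _ ≤ ∑ w' : ↥T, |G.adjugate ⟨w, hw⟩ w'| * (S * M) := by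
          refine Finset.sum_le_sum fun w' _ => ?_
          rw [abs_mul]
          exact mul_le_mul_of_nonneg_left (hyb w') (abs_nonneg _)
      _ = (∑ w' : ↥T, |G.adjugate ⟨w, hw⟩ w'|) * (S * M) := (Finset.sum_mul _ _ _).symm
      _ ≤ adjsum * (S * M) := by
          refine mul_le_mul_of_nonneg_right ?_
            (mul_nonneg hS0 (Int.ofNat_nonneg M))
          rw [hadjsum]
          exact Finset.single_le_sum
            (f := fun w0 : ↥T => ∑ w' : ↥T, |G.adjugate w0 w'|)
            (fun w0 _ => Finset.sum_nonneg fun w' _ => abs_nonneg _) (Finset.mem_univ (⟨w, hw⟩ : ↥T))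
      _ = adjsum * S * M := by ring
  have h10 : |G.det * d ⟨w, hw⟩| = |G.det| * (c w : ℤ) := by
    rw [abs_mul]
    congr 1
    exact abs_of_nonneg (Int.ofNat_nonneg _)
  have h11 : 1 ≤ |G.det| := Int.one_le_abs (by exact hdet)
  have h12 : (c w : ℤ) ≤ adjsum * S * M := by
    have h13 : (c w : ℤ) ≤ |G.det| * (c w : ℤ) := by
      nlinarith [Int.ofNat_nonneg (c w)]
    rw [h10] at h9
    linarith
  have h14 : ((adjsum * S).toNat : ℤ) = adjsum * S :=
    Int.toNat_of_nonneg (mul_nonneg hadjsum0 hS0)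
  have h15 : (c w : ℤ) ≤ ((adjsum * S).toNat : ℤ) * M := by rw [h14]; exact h12
  exact_mod_cast h15


lemma ind_subset {B T : Finset (Fin n → ℤ)} (hTB : T ⊆ B)
    (hindB : ∀ c : (Fin n → ℤ) → ℤ, ∑ w ∈ B, c w • w = 0 → ∀ w ∈ B, c w = 0) :
    ∀ c : (Fin n → ℤ) → ℤ, ∑ w ∈ T, c w • w = 0 → ∀ w ∈ T, c w = 0 := by
  classical
  intro c hc w hw
  set cb : (Fin n → ℤ) → ℤ := fun a => if a ∈ T then c a else 0 with hcb
  have hsum : ∑ w ∈ B, cb w • w = 0 := by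
    rw [← Finset.sum_subset hTB (fun a _ ha => by simp [hcb, ha])]
    rw [← hc]
    exact Finset.sum_congr rfl fun a ha => by simp [hcb, ha]
  have h1 := hindB cb hsum w (hTB hw)
  simpa [hcb, hw] using h1

lemma indepR_to_stmt {B : Finset (Fin n → ℤ)}
    (hli : LinearIndependent ℝ (fun b : ↥B => castVec (b : Fin n → ℤ))) :
    ∀ c : (Fin n → ℤ) → ℤ, ∑ w ∈ B, c w • w = 0 → ∀ w ∈ B, c w = 0 := by
  intro c hc w hw
  have hsum : ∑ b : ↥B, ((c (b : Fin n → ℤ) : ℝ)) • castVec (b : Fin n → ℤ) = 0 := by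
    have h1 : castVec (∑ w ∈ B, c w • w) = 0 := by rw [hc]; funext j; simp [castVec]
    rw [castVec_sum] at h1
    calc ∑ b : ↥B, ((c (b : Fin n → ℤ) : ℝ)) • castVec (b : Fin n → ℤ)
        = ∑ w ∈ B, ((c w : ℝ)) • castVec w := by
          rw [Finset.univ_eq_attach]
          exact Finset.sum_attach B (fun w => ((c w : ℝ)) • castVec w)
      _ = 0 := by
          rw [← h1]
          exact Finset.sum_congr rfl fun w _ => (castVec_zsmul _ _).symm
  have h2 := Fintype.linearIndependent_iff.1 hli (fun b => (c (b : Fin n → ℤ) : ℝ)) hsum ⟨w, hw⟩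
  exact_mod_cast h2

lemma coneV_mono {B A : Finset (Fin n → ℤ)} (hBA : B ⊆ A) : coneV B ⊆ coneV A := by
  rintro x ⟨c, hc0, hcsum⟩
  rw [← hcsum]
  exact sum_mem_coneV hBA c hc0

lemma main_structure {A : Finset (Fin n → ℤ)}
    (hspan : Submodule.span ℤ (A : Set (Fin n → ℤ)) = ⊤) :
    ∃ L : List ((Fin n → ℤ) × Finset (Fin n → ℤ)),
      (∀ p ∈ L, p.2 ⊆ A ∧ p.2.card ≤ n - 1 ∧
        (∀ c : (Fin n → ℤ) → ℤ, ∑ w ∈ p.2, c w • w = 0 → ∀ w ∈ p.2, c w = 0) ∧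
        (fun y => p.1 + y) '' PV (insert 0 p.2) ⊆ EV A) ∧
      ∀ x ∈ EV A, ∃ p ∈ L, x ∈ (fun y => p.1 + y) '' PV (insert 0 p.2) := by
  classical
  set Pairs : Finset (Finset (Fin n → ℤ) × (Fin n → ℤ)) :=
    (A.powerset ×ˢ Fintype.piFinset
      (fun j => Finset.Icc (-(∑ a ∈ A, |a j|)) (∑ a ∈ A, |a j|))).filter
      (fun Bf => (∀ c : (Fin n → ℤ) → ℤ,
          ∑ w ∈ Bf.1, c w • w = 0 → ∀ w ∈ Bf.1, c w = 0)
        ∧ castVec Bf.2 ∈ coneV A) with hPairs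
  have hpair : ∀ Bf ∈ Pairs.toList, ∃ L' : List ((Fin n → ℤ) × Finset (Fin n → ℤ)),
      (∀ p ∈ L', p.2 ⊆ A ∧ p.2.card ≤ n - 1 ∧
        (∀ c : (Fin n → ℤ) → ℤ, ∑ w ∈ p.2, c w • w = 0 → ∀ w ∈ p.2, c w = 0) ∧
        (fun y => p.1 + y) '' PV (insert 0 p.2) ⊆ EV A) ∧
      (∀ x ∈ EV A, (∃ q ∈ PV Bf.1, x = Bf.2 + q) →
        ∃ p ∈ L', x ∈ (fun y => p.1 + y) '' PV (insert 0 p.2)) := by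
    rintro ⟨B, f⟩ hBf
    rw [Finset.mem_toList, hPairs, Finset.mem_filter] at hBf
    obtain ⟨hmem, hindB, hfcone⟩ := hBf
    have hBA : B ⊆ A := Finset.mem_powerset.1 (Finset.mem_product.1 hmem).1
    set D : Set ((Fin n → ℤ) → ℕ) :=
      {c | (∀ a, a ∉ B → c a = 0) ∧ f + ∑ a ∈ B, ((c a : ℤ)) • a ∈ EV A} with hD
    have hsuppD : ∀ c ∈ D, ∀ a, a ∉ B → c a = 0 := fun c hc => hc.1
    have hdownD : ∀ c ∈ D, ∀ c' : (Fin n → ℤ) → ℕ, (∀ a, c' a ≤ c a) → c' ∈ D := by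
      intro c hc c' hle
      have hsupp' : ∀ a, a ∉ B → c' a = 0 := fun a ha =>
        Nat.le_zero.1 ((hle a).trans_eq (hc.1 a ha))
      have hsplit : ∑ a ∈ B, ((c a : ℤ)) • a
          = (∑ a ∈ B, ((c' a : ℤ)) • a) + ∑ a ∈ B, (((c a - c' a : ℕ) : ℤ)) • a := by
        rw [← Finset.sum_add_distrib]
        refine Finset.sum_congr rfl fun a _ => ?_
        rw [← add_smul]
        congr 1
        have hla := hle a
        omega
      have hxx : f + ∑ a ∈ B, ((c a : ℤ)) • a
          = (f + ∑ a ∈ B, ((c' a : ℤ)) • a) + ∑ a ∈ B, (((c a - c' a : ℕ) : ℤ)) • a := by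
        rw [hsplit]; abel
      refine ⟨hsupp', ?_, ?_⟩
      · have h1 : castVec (f + ∑ a ∈ B, ((c' a : ℤ)) • a)
            = castVec f + ∑ a ∈ B, (((c' a : ℤ)) : ℝ) • castVec a := by
          rw [castVec_add, castVec_sum]
          congr 1
          exact Finset.sum_congr rfl fun a _ => castVec_zsmul _ _
        rw [h1]
        exact coneV_add hfcone (sum_mem_coneV hBA _
          (fun b _ => by exact_mod_cast Int.ofNat_nonneg (c' b)))
      · intro hPV
        have h2 := hc.2.2
        apply h2
        rw [hxx]
        exact PV_add hPV (PV_mono hBA ⟨fun a => c a - c' a, rfl⟩)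
    obtain ⟨L0, hL0piece, hL0cover, hL0proper⟩ := downset B.card B D le_rfl hsuppD hdownD
    have hindB' : LinearIndependent ℤ (fun b : ↥B => (b : Fin n → ℤ)) := by
      rw [Fintype.linearIndependent_iff]
      intro g hg b
      have hsum : ∑ w ∈ B, (fun a => if h : a ∈ B then g ⟨a, h⟩ else 0) w • w = 0 := by
        rw [← Finset.sum_attach B
          (fun w => (fun a => if h : a ∈ B then g ⟨a, h⟩ else 0) w • w), ← hg,
          ← Finset.univ_eq_attach]
        exact Finset.sum_congr rfl fun w _ => by simp only [dif_pos w.2, Subtype.coe_eta]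
      have h1 := hindB _ hsum b b.2
      rw [dif_pos b.2, Subtype.coe_eta] at h1
      exact h1
    have hBn : B.card ≤ n := by
      have h1 := hindB'.finset_card_le_finrank
      rwa [Module.finrank_pi, Fintype.card_fin] at h1
    have hcardT : ∀ p ∈ L0, p.2.card ≤ n - 1 := by
      intro p hp
      have hTB : p.2 ⊆ B := (hL0piece p hp).1
      by_cases hBcard : B.card = n
      · obtain ⟨q, hqPV, hfq⟩ := absorb hBA hspan hBcard hindB f
        obtain ⟨cq, hcqsupp, hcqsum⟩ := mem_PV_iff.1 hqPV
        have hwit : ∃ c : (Fin n → ℤ) → ℕ, (∀ a, a ∉ B → c a = 0) ∧ c ∉ D := by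
          refine ⟨cq, hcqsupp, fun hcD => ?_⟩
          have h3 := hcD.2.2
          rw [hcqsum] at h3
          exact h3 hfq
        have hTne := hL0proper hwit p hp
        have h4 : p.2 ⊂ B := ssubset_of_subset_of_ne hTB hTne
        have h5 := Finset.card_lt_card h4
        omega
      · have h6 := Finset.card_le_card hTB
        omega
    refine ⟨L0.map (fun p => (f + ∑ w ∈ B, ((p.1 w : ℤ)) • w, p.2)), ?_, ?_⟩
    · intro p hp
      obtain ⟨q, hqL0, rfl⟩ := List.mem_map.1 hp
      have hq := hL0piece q hqL0
      refine ⟨hq.1.trans hBA, hcardT q hqL0, ind_subset hq.1 hindB, ?_⟩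
      rintro x ⟨y, hy, rfl⟩
      rw [PV_insert_zero] at hy
      obtain ⟨c', hc'supp, hc'sum⟩ := mem_PV_iff.1 hy
      have hcD := hq.2 c' hc'supp
      have hsubT : ∑ w ∈ q.2, ((c' w : ℤ)) • w = ∑ w ∈ B, ((c' w : ℤ)) • w :=
        Finset.sum_subset hq.1 (fun a _ ha => by rw [hc'supp a ha]; simp)
      have heq : (fun y => (f + ∑ w ∈ B, ((q.1 w : ℤ)) • w) + y) y
          = f + ∑ a ∈ B, (((q.1 + c') a : ℤ)) • a := by
        dsimp only
        rw [← hc'sum, hsubT, add_assoc, ← Finset.sum_add_distrib]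
        congr 1
        refine Finset.sum_congr rfl fun a _ => ?_
        simp [Pi.add_apply, Nat.cast_add, add_smul]
      rw [heq]
      exact hcD.2
    · rintro x hxEV ⟨q, hqPV, hxq⟩
      obtain ⟨c, hcsupp, hcsum⟩ := mem_PV_iff.1 hqPV
      have hcD : c ∈ D := ⟨hcsupp, by rw [hcsum, ← hxq]; exact hxEV⟩
      obtain ⟨p0, hp0, c', hc'supp, hc'eq⟩ := hL0cover c hcD
      have hTB : p0.2 ⊆ B := (hL0piece p0 hp0).1
      refine ⟨(f + ∑ w ∈ B, ((p0.1 w : ℤ)) • w, p0.2), List.mem_map_of_mem hp0,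
        ∑ w ∈ p0.2, ((c' w : ℤ)) • w, ?_, ?_⟩
      · rw [PV_insert_zero]
        exact mem_PV_iff.2 ⟨c', hc'supp, rfl⟩
      · dsimp only
        have hsubT : ∑ w ∈ p0.2, ((c' w : ℤ)) • w = ∑ w ∈ B, ((c' w : ℤ)) • w :=
          Finset.sum_subset hTB (fun a _ ha => by rw [hc'supp a ha]; simp)
        rw [hsubT, hxq, ← hcsum, hc'eq, add_assoc, ← Finset.sum_add_distrib]
        congr 1
        refine Finset.sum_congr rfl fun a _ => ?_
        simp [Pi.add_apply, Nat.cast_add, add_smul]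
  obtain ⟨F, hF⟩ := list_choice Pairs.toList _ hpair
  refine ⟨Pairs.toList.flatMap F, ?_, ?_⟩
  · intro p hp
    obtain ⟨Bf, hBf, hpF⟩ := List.mem_flatMap.1 hp
    exact (hF Bf hBf).1 p hpF
  · intro x hxEV
    obtain ⟨B, hBA, hli, t, ht0, htsum⟩ := cara hxEV.1
    obtain ⟨f, p, hpPV, hxfp, hfcone, hfbound⟩ := floor_decomp ht0 htsum
    have hBfP : (B, f) ∈ Pairs := by
      rw [hPairs, Finset.mem_filter]
      refine ⟨Finset.mem_product.2 ⟨Finset.mem_powerset.2 hBA, ?_⟩,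
        indepR_to_stmt hli, coneV_mono hBA hfcone⟩
      rw [Fintype.mem_piFinset]
      intro j
      rw [Finset.mem_Icc]
      have h1 := hfbound j
      have h2 : ∑ b ∈ B, |b j| ≤ ∑ a ∈ A, |a j| :=
        Finset.sum_le_sum_of_subset_of_nonneg hBA (fun a _ _ => abs_nonneg _)
      exact abs_le.1 (le_trans h1 h2)
    obtain ⟨p', hp', hxp'⟩ := (hF (B, f) (Finset.mem_toList.2 hBfP)).2 x hxEV ⟨p, hpPV, hxfp⟩
    exact ⟨p', List.mem_flatMap.2 ⟨(B, f), Finset.mem_toList.2 hBfP, hp'⟩, hxp'⟩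


lemma hull_bound {A : Finset (Fin n → ℤ)} {N : ℕ} {x : Fin n → ℤ}
    (hx : castVec x ∈ (N : ℝ) • convexHull ℝ (castVec '' (A : Set (Fin n → ℤ)))) :
    ∀ j, |x j| ≤ (N : ℤ) * ∑ a ∈ A, ∑ j', |a j'| := by
  set R : ℤ := ∑ a ∈ A, ∑ j', |a j'| with hR
  have hR0 : 0 ≤ R := Finset.sum_nonneg fun a _ =>
    Finset.sum_nonneg fun j _ => abs_nonneg _
  have hK : convexHull ℝ (castVec '' (A : Set (Fin n → ℤ)))
      ⊆ {y : Fin n → ℝ | ∀ j, |y j| ≤ (R : ℝ)} := by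
    apply convexHull_min
    · rintro y ⟨a, haA, rfl⟩ j
      have h1 : |a j| ≤ R := by
        rw [hR]
        calc |a j| ≤ ∑ j', |a j'| :=
              Finset.single_le_sum (f := fun j' => |a j'|)
                (fun j' _ => abs_nonneg _) (Finset.mem_univ j)
          _ ≤ ∑ a' ∈ A, ∑ j', |a' j'| :=
              Finset.single_le_sum (f := fun a' => ∑ j', |a' j'|)
                (fun a' _ => Finset.sum_nonneg fun j' _ => abs_nonneg _) haA
      have h2 : |castVec a j| = ((|a j| : ℤ) : ℝ) := by rw [Int.cast_abs]; rfl
      rw [h2]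
      exact_mod_cast h1
    · intro y hy z hz s t hs ht hst
      intro j
      have h3 : (s • y + t • z) j = s * y j + t * z j := rfl
      rw [h3]
      calc |s * y j + t * z j| ≤ |s * y j| + |t * z j| := abs_add_le _ _
        _ = s * |y j| + t * |z j| := by
            rw [abs_mul, abs_mul, abs_of_nonneg hs, abs_of_nonneg ht]
        _ ≤ s * (R : ℝ) + t * (R : ℝ) :=
            add_le_add (mul_le_mul_of_nonneg_left (hy j) hs)
              (mul_le_mul_of_nonneg_left (hz j) ht)
        _ = (R : ℝ) := by rw [← add_mul, hst, one_mul]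
  obtain ⟨y, hy, hxy⟩ := Set.mem_smul_set.1 hx
  intro j
  have hxj : castVec x j = (x j : ℝ) := rfl
  have h4 : (x j : ℝ) = (N : ℝ) * y j := by
    rw [← hxj, ← hxy]; rfl
  have h5 : |(x j : ℝ)| ≤ (N : ℝ) * (R : ℝ) := by
    rw [h4, abs_mul, abs_of_nonneg (by positivity : (0:ℝ) ≤ (N : ℝ))]
    exact mul_le_mul_of_nonneg_left (hK hy j) (by positivity)
  exact_mod_cast h5

end Aux

/-- Theorem 3 and its consequence: `E(A)` is a finite union of
sets `v + P(B ∪ {0})` with `v ∈ C_A ∩ ℤⁿ` and `B ⊆ A` linearly independent with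
at most `n-1` elements; consequently `#(E(A) ∩ N·H(A)) = O(N^{n-1})`. -/
theorem stmt19 (n : ℕ) (A : Finset (Fin n → ℤ)) (h0 : (0 : Fin n → ℤ) ∈ A)
    (hspan : Submodule.span ℤ (A : Set (Fin n → ℤ)) = ⊤) :
    (∃ (k : ℕ) (v : Fin k → (Fin n → ℤ)) (B : Fin k → Finset (Fin n → ℤ)),
      (∀ i, castVec (v i) ∈ coneV A) ∧
      (∀ i, B i ⊆ A) ∧
      (∀ i, (B i).card ≤ n - 1) ∧
      (∀ i, ∀ c : (Fin n → ℤ) → ℤ,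
        ∑ w ∈ B i, c w • w = 0 → ∀ w ∈ B i, c w = 0) ∧
      EV A = ⋃ i, (fun y => v i + y) '' PV (insert 0 (B i))) ∧
    ∃ C : ℕ, ∀ N : ℕ, 1 ≤ N →
      Nat.card
        (EV A ∩
          {x : Fin n → ℤ |
            castVec x ∈ (N : ℝ) • convexHull ℝ (castVec '' (A : Set (Fin n → ℤ)))} :
          Set (Fin n → ℤ)) ≤ C * N ^ (n - 1) := by
  classical
  obtain ⟨L, hLpiece, hLcover⟩ := main_structure hspan
  set vf : Fin L.length → (Fin n → ℤ) := fun i => (L.get i).1 with hvf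
  set Tf : Fin L.length → Finset (Fin n → ℤ) := fun i => (L.get i).2 with hTf
  have hmemL : ∀ i : Fin L.length, L.get i ∈ L := fun i => List.get_mem L i
  have hsub : ∀ i, Tf i ⊆ A := fun i => (hLpiece _ (hmemL i)).1
  have hcard : ∀ i, (Tf i).card ≤ n - 1 := fun i => (hLpiece _ (hmemL i)).2.1
  have hind : ∀ i, ∀ c : (Fin n → ℤ) → ℤ,
      ∑ w ∈ Tf i, c w • w = 0 → ∀ w ∈ Tf i, c w = 0 :=
    fun i => (hLpiece _ (hmemL i)).2.2.1
  have hpieceEV : ∀ i, (fun y => vf i + y) '' PV (insert 0 (Tf i)) ⊆ EV A :=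
    fun i => (hLpiece _ (hmemL i)).2.2.2
  have hEVeq : EV A = ⋃ i, (fun y => vf i + y) '' PV (insert 0 (Tf i)) := by
    ext x
    constructor
    · intro hx
      obtain ⟨p, hpL, hxp⟩ := hLcover x hx
      obtain ⟨i, hi⟩ := List.mem_iff_get.1 hpL
      rw [Set.mem_iUnion]
      exact ⟨i, by simp only [hvf, hTf, hi]; exact hxp⟩
    · intro hx
      rw [Set.mem_iUnion] at hx
      obtain ⟨i, hxi⟩ := hx
      exact hpieceEV i hxi
  have hvcone : ∀ i, castVec (vf i) ∈ coneV A := by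
    intro i
    have h1 : vf i ∈ (fun y => vf i + y) '' PV (insert 0 (Tf i)) :=
      ⟨0, zero_mem_PV _, by simp⟩
    exact (hpieceEV i h1).1
  refine ⟨⟨L.length, vf, Tf, hvcone, hsub, hcard, hind, hEVeq⟩, ?_⟩
  have hgram := fun i : Fin L.length => gram_bound (hind i)
  choose K hK using hgram
  set Rn : ℕ := ∑ a ∈ A, ∑ j, (a j).natAbs with hRn
  set Mv : Fin L.length → ℕ := fun i => ∑ j, ((vf i) j).natAbs with hMv
  set Q : Fin L.length → ℕ := fun i => K i * (Rn + Mv i) with hQ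
  refine ⟨∑ i, (Q i + 1) ^ (n - 1), ?_⟩
  intro N hN
  set Fi : Fin L.length → Finset (Fin n → ℤ) := fun i =>
    (Fintype.piFinset (fun _ : ↥(Tf i) => Finset.range (Q i * N + 1))).image
      (fun c : ↥(Tf i) → ℕ =>
        vf i + ∑ w ∈ (Tf i).attach, ((c w : ℤ)) • (w : Fin n → ℤ)) with hFi
  have hRnZ : ((Rn : ℕ) : ℤ) = ∑ a ∈ A, ∑ j', |a j'| := by
    rw [hRn]
    push_cast [Int.natCast_natAbs]
    rfl
  have hsubset : (EV A ∩ {x : Fin n → ℤ |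
      castVec x ∈ (N : ℝ) • convexHull ℝ (castVec '' (A : Set (Fin n → ℤ)))})
      ⊆ ↑(Finset.univ.biUnion Fi) := by
    rintro x ⟨hxEV, hxH⟩
    have hxU : x ∈ ⋃ i, (fun y => vf i + y) '' PV (insert 0 (Tf i)) := hEVeq ▸ hxEV
    rw [Set.mem_iUnion] at hxU
    obtain ⟨i, y, hy, hxy⟩ := hxU
    rw [PV_insert_zero] at hy
    obtain ⟨c, hcsupp, hcsum⟩ := mem_PV_iff.1 hy
    have hxb : ∀ j, |x j| ≤ (N : ℤ) * (Rn : ℤ) := by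
      intro j
      have h1 := hull_bound hxH j
      rw [hRnZ]
      exact h1
    have hvb : ∀ j, |(vf i) j| ≤ (Mv i : ℤ) := by
      intro j
      have h2 : ((Mv i : ℕ) : ℤ) = ∑ j', |(vf i) j'| := by
        rw [hMv]
        push_cast [Int.natCast_natAbs]
        rfl
      rw [h2]
      exact Finset.single_le_sum (f := fun j' => |(vf i) j'|)
        (fun j' _ => abs_nonneg _) (Finset.mem_univ j)
    set Mtot : ℕ := N * (Rn + Mv i) with hMtot
    have hyeq : ∑ w ∈ Tf i, ((c w : ℤ)) • w = x - vf i := by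
      rw [hcsum]
      have hxy' : vf i + y = x := hxy
      rw [← hxy']
      abel
    have hyb : ∀ j, |(∑ w ∈ Tf i, ((c w : ℤ)) • w) j| ≤ (Mtot : ℤ) := by
      intro j
      have h6 : ((Mtot : ℕ) : ℤ) = (N : ℤ) * ((Rn : ℤ) + (Mv i : ℤ)) := by
        rw [hMtot]; push_cast; ring
      have hN' : (1 : ℤ) ≤ (N : ℤ) := by exact_mod_cast hN
      rw [hyeq, Pi.sub_apply]
      calc |x j - (vf i) j| ≤ |x j| + |(vf i) j| := abs_sub _ _
        _ ≤ (N : ℤ) * (Rn : ℤ) + (Mv i : ℤ) := add_le_add (hxb j) (hvb j)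
        _ ≤ (Mtot : ℤ) := by
            rw [h6]
            nlinarith [Int.ofNat_nonneg (Mv i), Int.ofNat_nonneg Rn]
    have hcb : ∀ w ∈ Tf i, c w ≤ Q i * N := by
      intro w hw
      have h5 := hK i c Mtot hyb w hw
      calc c w ≤ K i * Mtot := h5
        _ = Q i * N := by rw [hMtot, hQ]; ring
    rw [Finset.mem_coe, Finset.mem_biUnion]
    refine ⟨i, Finset.mem_univ i, ?_⟩
    simp only [hFi, Finset.mem_image]
    refine ⟨fun w => c (w : Fin n → ℤ), ?_, ?_⟩
    · rw [Fintype.mem_piFinset]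
      intro w
      rw [Finset.mem_range]
      exact Nat.lt_succ_of_le (hcb (w : Fin n → ℤ) w.2)
    · rw [Finset.sum_attach (Tf i) (fun w => ((c w : ℤ)) • w), hcsum]
      exact hxy
  calc Nat.card (EV A ∩ {x : Fin n → ℤ |
          castVec x ∈ (N : ℝ) • convexHull ℝ (castVec '' (A : Set (Fin n → ℤ)))} :
        Set (Fin n → ℤ))
      = (EV A ∩ {x : Fin n → ℤ |
          castVec x ∈ (N : ℝ) • convexHull ℝ (castVec '' (A : Set (Fin n → ℤ)))}).ncard :=
        Nat.card_coe_set_eq _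
    _ ≤ (↑(Finset.univ.biUnion Fi) : Set (Fin n → ℤ)).ncard :=
        Set.ncard_le_ncard hsubset (Finset.finite_toSet _)
    _ = (Finset.univ.biUnion Fi).card := Set.ncard_coe_finset _
    _ ≤ ∑ i, (Fi i).card := Finset.card_biUnion_le
    _ ≤ ∑ i, (Q i + 1) ^ (n - 1) * N ^ (n - 1) := by
        refine Finset.sum_le_sum fun i _ => ?_
        have hc1 : (Fi i).card
            ≤ (Fintype.piFinset (fun _ : ↥(Tf i) => Finset.range (Q i * N + 1))).card :=
          Finset.card_image_le
        have hc2 : (Fintype.piFinset (fun _ : ↥(Tf i) => Finset.range (Q i * N + 1))).card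
            = (Q i * N + 1) ^ (Tf i).card := by
          rw [Fintype.card_piFinset]
          simp [Finset.card_range, Finset.prod_const, Fintype.card_coe]
        have hc3 : Q i * N + 1 ≤ (Q i + 1) * N := by
          have h7 : (Q i + 1) * N = Q i * N + N := by ring
          rw [h7]
          exact Nat.add_le_add_left hN _
        have hc4 : (Q i * N + 1) ^ (Tf i).card ≤ ((Q i + 1) * N) ^ (Tf i).card :=
          Nat.pow_le_pow_left hc3 _
        have hc5 : ((Q i + 1) * N) ^ (Tf i).card ≤ ((Q i + 1) * N) ^ (n - 1) := by
          apply Nat.pow_le_pow_right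
          · exact Nat.mul_pos (Nat.succ_pos _) hN
          · exact hcard i
        calc (Fi i).card ≤ (Q i * N + 1) ^ (Tf i).card := by rw [← hc2]; exact hc1
          _ ≤ ((Q i + 1) * N) ^ (n - 1) := le_trans hc4 hc5
          _ = (Q i + 1) ^ (n - 1) * N ^ (n - 1) := Nat.mul_pow _ _ _
    _ = (∑ i, (Q i + 1) ^ (n - 1)) * N ^ (n - 1) := (Finset.sum_mul _ _ _).symm
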